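/- The timed language L' over alphabet {a}, consisting of timed words containing two events at timestamps exactly one time unit apart, is recognized by a nondeterministic one-clock timed automaton with reachability acceptance, but is not recognized by any history-deterministic timed automaton with parity acceptance (with any number of clocks). -/

import Mathlib

open scoped NNReal

/-- Clock constraints (guards): Boolean combinations of `x ≤ n`, `x < n`,
`x − y ≤ n`, `x − y < n`. -/
inductive Guard (C : Type) where
  | tt : Guard C
  | le (x : C) (n : ℕ) : Guard C
  | lt (x : C) (n : ℕ) : Guard C
  | dle (x y : C) (n : ℕ) : Guard C
  | dlt (x y : C) (n : ℕ) : Guard C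
  | band (g₁ g₂ : Guard C) : Guard C
  | bnot (g : Guard C) : Guard C

/-- Satisfaction of a guard by a clock valuation. -/
def Guard.sat {C : Type} : Guard C → (C → ℝ≥0) → Prop
  | .tt, _ => True
  | .le x n, ν => (ν x : ℝ) ≤ n
  | .lt x n, ν => (ν x : ℝ) < n
  | .dle x y n, ν => (ν x : ℝ) - (ν y : ℝ) ≤ n
  | .dlt x y n, ν => (ν x : ℝ) - (ν y : ℝ) < n
  | .band g₁ g₂, ν => g₁.sat ν ∧ g₂.sat ν
  | .bnot g, ν => ¬ g.sat ν

/-- The largest constant appearing in a guard in a constraint involving clock `z`. -/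
def Guard.maxConst {C : Type} [DecidableEq C] : Guard C → C → ℕ
  | .tt, _ => 0
  | .le x n, z => if z = x then n else 0
  | .lt x n, z => if z = x then n else 0
  | .dle x y n, z => if z = x ∨ z = y then n else 0
  | .dlt x y n, z => if z = x ∨ z = y then n else 0
  | .band g₁ g₂, z => max (g₁.maxConst z) (g₂.maxConst z)
  | .bnot g, z => g.maxConst z

/-- A transition of a timed automaton: source, guard, letter, reset set, destination. -/
structure Tr (Q C A : Type) where
  src : Q
  guard : Guard C
  letter : A
  reset : Set C
  dst : Q

/-- A timed automaton (the acceptance condition is kept as a separate parameter). -/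
structure TA (Q C A : Type) where
  init : Q
  trans : Set (Tr Q C A)

namespace TA

variable {Q C A : Type}

/-- The valuation obtained from `ν` by resetting the clocks of transition `τ`. -/
noncomputable def resetVal (τ : Tr Q C A) (ν : C → ℝ≥0) : C → ℝ≥0 :=
  fun x => open Classical in if x ∈ τ.reset then 0 else ν x


/-- Timed words: infinite sequences of letters with strictly increasing timestamps. -/
def IsTimedWord (w : ℕ → A × ℝ≥0) : Prop :=
  StrictMono fun n => (w n).2

/-- The delay elapsing before the `n`-th event of the timed word `w`. -/
noncomputable def delayAt (w : ℕ → A × ℝ≥0) (n : ℕ) : ℝ≥0 :=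
  (w n).2 - (if n = 0 then 0 else (w (n - 1)).2)

/-- The configurations visited along the transition sequence `ρ` on the timed word `w`:
before each discrete step, time elapses up to the next timestamp. -/
noncomputable def configs (T : TA Q C A) (w : ℕ → A × ℝ≥0) (ρ : ℕ → Tr Q C A) :
    ℕ → Q × (C → ℝ≥0)
  | 0 => (T.init, fun _ => 0)
  | n + 1 => ((ρ n).dst, resetVal (ρ n) (fun x => (configs T w ρ n).2 x + delayAt w n))

/-- `ρ` is a run of `T` on the timed word `w` from the initial configuration. -/
def IsRunOn (T : TA Q C A) (w : ℕ → A × ℝ≥0) (ρ : ℕ → Tr Q C A) : Prop :=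
  ∀ n, ρ n ∈ T.trans ∧ (ρ n).letter = (w n).1 ∧ (ρ n).src = (T.configs w ρ n).1 ∧
    (ρ n).guard.sat (fun x => (T.configs w ρ n).2 x + delayAt w n)

/-- The timed language of `T` for the acceptance condition `Acc` on runs. -/
def Lang (T : TA Q C A) (Acc : (ℕ → Tr Q C A) → Prop) : Set (ℕ → A × ℝ≥0) :=
  {w | IsTimedWord w ∧ ∃ ρ, T.IsRunOn w ρ ∧ Acc ρ}

/-- Safety acceptance: all states along the run stay in the safe set. -/
def safetyAcc (safe : Set Q) (ρ : ℕ → Tr Q C A) : Prop :=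
  ∀ n, (ρ n).src ∈ safe ∧ (ρ n).dst ∈ safe

/-- Reachability acceptance: the run visits a state of the target set. -/
def reachAcc (F : Set Q) (ρ : ℕ → Tr Q C A) : Prop :=
  ∃ n, (ρ n).src ∈ F ∨ (ρ n).dst ∈ F

/-- The finite history (timed letters paired with chosen transitions) built by iterating
a candidate resolver `r` on the timed word `w`. -/
def histOf (r : List ((A × ℝ≥0) × Tr Q C A) → (A × ℝ≥0) → Tr Q C A)
    (w : ℕ → A × ℝ≥0) : ℕ → List ((A × ℝ≥0) × Tr Q C A)
  | 0 => []
  | n + 1 => histOf r w n ++ [(w n, r (histOf r w n) (w n))]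

/-- The run built by iterating the resolver `r` on the timed word `w`. -/
def runOf (r : List ((A × ℝ≥0) × Tr Q C A) → (A × ℝ≥0) → Tr Q C A)
    (w : ℕ → A × ℝ≥0) (n : ℕ) : Tr Q C A :=
  r (histOf r w n) (w n)

/-- `r` is a resolver for `T` with acceptance `Acc`. -/
def IsResolver (T : TA Q C A) (Acc : (ℕ → Tr Q C A) → Prop)
    (r : List ((A × ℝ≥0) × Tr Q C A) → (A × ℝ≥0) → Tr Q C A) : Prop :=
  ∀ w ∈ T.Lang Acc, T.IsRunOn w (runOf r w) ∧ Acc (runOf r w)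

/-- History-determinism: existence of a resolver. -/
def HD (T : TA Q C A) (Acc : (ℕ → Tr Q C A) → Prop) : Prop :=
  ∃ r, T.IsResolver Acc r

/-- Determinism: transitions from the same state over the same letter have mutually
exclusive guards. -/
def Deterministic (T : TA Q C A) : Prop :=
  ∀ τ₁ ∈ T.trans, ∀ τ₂ ∈ T.trans, τ₁.src = τ₂.src → τ₁.letter = τ₂.letter →
    τ₁ ≠ τ₂ → ∀ ν : C → ℝ≥0, ¬(τ₁.guard.sat ν ∧ τ₂.guard.sat ν)

end TA

open scoped NNReal

/-- Parity acceptance: the highest priority occurring infinitely often is even. -/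
def parityAcc {Q C A : Type} (pri : Q → ℕ) (ρ : ℕ → Tr Q C A) : Prop :=
  ∃ k, Even k ∧ (∀ N, ∃ n ≥ N, pri (ρ n).dst = k) ∧
    ∀ k', (∀ N, ∃ n ≥ N, pri (ρ n).dst = k') → k' ≤ k

/-- The language `L'` of timed words over a one-letter alphabet containing two events
exactly one time unit apart. -/
def LPrime : Set (ℕ → Unit × ℝ≥0) :=
  {w | TA.IsTimedWord w ∧ ∃ i j : ℕ, ((w j).2 : ℝ) - ((w i).2 : ℝ) = 1}


/-! ### Auxiliary infrastructure -/

namespace TA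

variable {Q C A : Type}

/-- Index of the last transition before step `n` that resets clock `x`. -/
noncomputable def lastIdx (ρ : ℕ → Tr Q C A) (x : C) : ℕ → Option ℕ
  | 0 => none
  | n + 1 => open Classical in if x ∈ (ρ n).reset then some n else lastIdx ρ x n

/-- The timestamp associated to an optional index (0 if none). -/
noncomputable def lrTime (w : ℕ → A × ℝ≥0) : Option ℕ → ℝ
  | none => 0
  | some m => ((w m).2 : ℝ)

lemma lastIdx_lt {ρ : ℕ → Tr Q C A} {x : C} {n m : ℕ}
    (h : lastIdx ρ x n = some m) : m < n := by
  induction n with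
  | zero => simp [lastIdx] at h
  | succ n ih =>
    rw [lastIdx] at h
    by_cases hx : x ∈ (ρ n).reset
    · simp [hx] at h; omega
    · simp [hx] at h; exact Nat.lt_succ_of_lt (ih h)

lemma lastIdx_congr {ρ ρ' : ℕ → Tr Q C A} {x : C} {n : ℕ}
    (h : ∀ m < n, ρ m = ρ' m) : lastIdx ρ x n = lastIdx ρ' x n := by
  induction n with
  | zero => rfl
  | succ n ih =>
    rw [lastIdx, lastIdx, h n (Nat.lt_succ_self n),
      ih fun m hm => h m (Nat.lt_succ_of_lt hm)]

lemma lastIdx_stable {ρ : ℕ → Tr Q C A} {x : C} {K m : ℕ} (d : ℕ)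
    (h : lastIdx ρ x (K + 1 + d) = some m) (hm : m ≤ K) :
    lastIdx ρ x (K + 1) = some m := by
  induction d with
  | zero => exact h
  | succ d ih =>
    rw [show K + 1 + (d + 1) = (K + 1 + d) + 1 by omega, lastIdx] at h
    by_cases hx : x ∈ (ρ (K + 1 + d)).reset
    · simp [hx] at h; omega
    · simp [hx] at h; exact ih h

lemma lastIdx_some {ρ : ℕ → Tr Q C A} {x : C} {n : ℕ}
    (h : ∃ m < n, x ∈ (ρ m).reset) : ∃ m, lastIdx ρ x n = some m := by
  induction n with
  | zero => obtain ⟨m, hm, _⟩ := h; omega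
  | succ n ih =>
    by_cases hx : x ∈ (ρ n).reset
    · exact ⟨n, by rw [lastIdx]; simp [hx]⟩
    · obtain ⟨m, hm, hr⟩ := h
      have hmn : m < n := by
        rcases Nat.lt_succ_iff_lt_or_eq.mp hm with h' | rfl
        · exact h'
        · exact absurd hr hx
      obtain ⟨m', hm'⟩ := ih ⟨m, hmn, hr⟩
      exact ⟨m', by rw [lastIdx]; simp [hx, hm']⟩

lemma delay_coe {w : ℕ → A × ℝ≥0} (hw : IsTimedWord w) (n : ℕ) :
    ((delayAt w n : ℝ≥0) : ℝ)
      = ((w n).2 : ℝ) - (if n = 0 then 0 else ((w (n - 1)).2 : ℝ)) := by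
  unfold delayAt
  cases n with
  | zero => simp
  | succ n =>
    have hle : (w n).2 ≤ (w (n + 1)).2 := (hw (Nat.lt_succ_self n)).le
    simp [NNReal.coe_sub hle]

lemma configs_fst (T : TA Q C A) (w : ℕ → A × ℝ≥0) (ρ : ℕ → Tr Q C A) (n : ℕ) :
    (T.configs w ρ n).1 = if h : n = 0 then T.init else (ρ (n - 1)).dst := by
  cases n with
  | zero => rfl
  | succ n => rfl

lemma val_eq (T : TA Q C A) {w : ℕ → A × ℝ≥0} (hw : IsTimedWord w)
    (ρ : ℕ → Tr Q C A) (n : ℕ) (x : C) :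
    (((T.configs w ρ n).2 x : ℝ≥0) : ℝ) + ((delayAt w n : ℝ≥0) : ℝ)
      = ((w n).2 : ℝ) - lrTime w (lastIdx ρ x n) := by
  induction n with
  | zero => simp [configs, lastIdx, lrTime, delay_coe hw 0]
  | succ n ih =>
    have hd : ((delayAt w (n + 1) : ℝ≥0) : ℝ) = ((w (n + 1)).2 : ℝ) - ((w n).2 : ℝ) := by
      rw [delay_coe hw]; simp
    by_cases hx : x ∈ (ρ n).reset
    · have hidx : lastIdx ρ x (n + 1) = some n := by rw [lastIdx]; simp [hx]
      have hcfg : (T.configs w ρ (n + 1)).2 x = 0 := by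
        show resetVal (ρ n) (fun y => (T.configs w ρ n).2 y + delayAt w n) x = 0
        rw [resetVal]; simp [hx]
      rw [hcfg, hidx, hd]; simp [lrTime]
    · have hidx : lastIdx ρ x (n + 1) = lastIdx ρ x n := by rw [lastIdx]; simp [hx]
      have hcfg : (T.configs w ρ (n + 1)).2 x
          = (T.configs w ρ n).2 x + delayAt w n := by
        show resetVal (ρ n) (fun y => (T.configs w ρ n).2 y + delayAt w n) x = _
        rw [resetVal]; simp [hx]
      rw [hcfg, hidx, hd]
      push_cast
      linarith [ih]

/-- Histories only depend on the prefix of the word. -/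
lemma histOf_congr (r : List ((A × ℝ≥0) × Tr Q C A) → (A × ℝ≥0) → Tr Q C A)
    {w w' : ℕ → A × ℝ≥0} {n : ℕ} (h : ∀ m < n, w m = w' m) :
    histOf r w n = histOf r w' n := by
  induction n with
  | zero => rfl
  | succ n ih =>
    unfold histOf
    rw [ih fun m hm => h m (Nat.lt_succ_of_lt hm), h n (Nat.lt_succ_self n)]

lemma runOf_congr (r : List ((A × ℝ≥0) × Tr Q C A) → (A × ℝ≥0) → Tr Q C A)
    {w w' : ℕ → A × ℝ≥0} {n : ℕ} (h : ∀ m ≤ n, w m = w' m) :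
    runOf r w n = runOf r w' n := by
  unfold runOf
  rw [histOf_congr r fun m hm => h m hm.le, h n le_rfl]

end TA

/-! ### Interval-equivalence of real quantities -/

/-- `q` and `q'` are equal or lie strictly inside the same unit interval. -/
def SameIv (q q' : ℝ) : Prop :=
  q = q' ∨ ∃ m : ℤ, ((m : ℝ) < q ∧ q < m + 1) ∧ ((m : ℝ) < q' ∧ q' < m + 1)

lemma SameIv.refl (q : ℝ) : SameIv q q := Or.inl rfl

lemma SameIv.neg {q q' : ℝ} (h : SameIv q q') : SameIv (-q) (-q') := by
  rcases h with rfl | ⟨m, ⟨h1, h2⟩, ⟨h3, h4⟩⟩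
  · exact Or.inl rfl
  · refine Or.inr ⟨-(m + 1), ⟨?_, ?_⟩, ⟨?_, ?_⟩⟩ <;> push_cast <;> linarith

lemma SameIv.le_iff {q q' : ℝ} (h : SameIv q q') (c : ℕ) :
    (q ≤ c ↔ q' ≤ c) := by
  rcases h with rfl | ⟨m, ⟨h1, h2⟩, ⟨h3, h4⟩⟩
  · rfl
  · have key : ∀ a : ℝ, (m : ℝ) < a → a < m + 1 → (a ≤ c ↔ (m : ℝ) + 1 ≤ c) := by
      intro a ha1 ha2
      constructor
      · intro hac
        have : (m : ℝ) < c := lt_of_lt_of_le ha1 hac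
        have : m < (c : ℤ) := by exact_mod_cast this
        have : m + 1 ≤ (c : ℤ) := this
        exact_mod_cast this
      · intro hmc; linarith
    rw [key q h1 h2, key q' h3 h4]

lemma SameIv.lt_iff {q q' : ℝ} (h : SameIv q q') (c : ℕ) :
    (q < c ↔ q' < c) := by
  rcases h with rfl | ⟨m, ⟨h1, h2⟩, ⟨h3, h4⟩⟩
  · rfl
  · have key : ∀ a : ℝ, (m : ℝ) < a → a < m + 1 → (a < c ↔ (m : ℝ) + 1 ≤ c) := by
      intro a ha1 ha2
      constructor
      · intro hac
        have : (m : ℝ) < c := lt_trans ha1 hac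
        have : m < (c : ℤ) := by exact_mod_cast this
        have : m + 1 ≤ (c : ℤ) := this
        exact_mod_cast this
      · intro hmc; linarith
    rw [key q h1 h2, key q' h3 h4]

/-- Guard satisfaction transfers between interval-equivalent valuations. -/
lemma Guard.sat_congr {C : Type} (g : Guard C) (ν ν' : C → ℝ≥0)
    (h1 : ∀ x, SameIv ((ν x : ℝ)) ((ν' x : ℝ)))
    (h2 : ∀ x y, SameIv ((ν x : ℝ) - (ν y : ℝ)) ((ν' x : ℝ) - (ν' y : ℝ))) :
    g.sat ν ↔ g.sat ν' := by
  induction g with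
  | tt => rfl
  | le x n => exact (h1 x).le_iff n
  | lt x n => exact (h1 x).lt_iff n
  | dle x y n => exact (h2 x y).le_iff n
  | dlt x y n => exact (h2 x y).lt_iff n
  | band g₁ g₂ ih₁ ih₂ => exact and_congr ih₁ ih₂
  | bnot g ih => exact not_congr ih


namespace TA

lemma lastIdx_eq {Q C A : Type} {ρ : ℕ → Tr Q C A} {x : C} {i n : ℕ}
    (hin : i < n) (hx : x ∈ (ρ i).reset)
    (h : ∀ m, i < m → m < n → x ∉ (ρ m).reset) : lastIdx ρ x n = some i := by
  induction n with
  | zero => omega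
  | succ n ih =>
    rw [lastIdx]
    rcases Nat.lt_succ_iff_lt_or_eq.mp hin with h' | rfl
    · simp only [h n h' (Nat.lt_succ_self n), if_false]
      exact ih h' fun m hm1 hm2 => h m hm1 (Nat.lt_succ_of_lt hm2)
    · simp [hx]

end TA

/-! ### Part 1: the one-clock automaton -/

namespace Part1

def g1 : Guard Unit := .band (.le () 1) (.bnot (.lt () 1))

def t0 : Tr (Fin 3) Unit Unit := ⟨0, .tt, (), ∅, 0⟩
def t1 : Tr (Fin 3) Unit Unit := ⟨0, .tt, (), Set.univ, 1⟩
def t2 : Tr (Fin 3) Unit Unit := ⟨1, .tt, (), ∅, 1⟩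
def t3 : Tr (Fin 3) Unit Unit := ⟨1, g1, (), ∅, 2⟩
def t4 : Tr (Fin 3) Unit Unit := ⟨2, .tt, (), ∅, 2⟩

def T1 : TA (Fin 3) Unit Unit := ⟨0, {t0, t1, t2, t3, t4}⟩

lemma mem_trans {τ : Tr (Fin 3) Unit Unit} (h : τ ∈ T1.trans) :
    τ = t0 ∨ τ = t1 ∨ τ = t2 ∨ τ = t3 ∨ τ = t4 := by
  simpa [T1, Set.mem_insert_iff] using h

lemma reach1 {w : ℕ → Unit × ℝ≥0} {ρ : ℕ → Tr (Fin 3) Unit Unit}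
    (hrun : T1.IsRunOn w ρ) :
    ∀ n, (T1.configs w ρ n).1 = 1 → ∃ m < n, ρ m = t1 := by
  intro n
  induction n with
  | zero => intro h; simp [TA.configs, T1] at h
  | succ n ih =>
    intro h
    have hd : (ρ n).dst = 1 := by
      rw [TA.configs_fst] at h; simpa using h
    obtain ⟨ht, _, hsrc, _⟩ := hrun n
    rcases mem_trans ht with h' | h' | h' | h' | h'
    · rw [h'] at hd; simp [t0] at hd
    · exact ⟨n, Nat.lt_succ_self n, h'⟩
    · rw [h'] at hsrc
      obtain ⟨m, hm, hh⟩ := ih hsrc.symm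
      exact ⟨m, Nat.lt_succ_of_lt hm, hh⟩
    · rw [h'] at hd; simp [t3] at hd
    · rw [h'] at hd; simp [t4] at hd

lemma reach2 {w : ℕ → Unit × ℝ≥0} {ρ : ℕ → Tr (Fin 3) Unit Unit}
    (hrun : T1.IsRunOn w ρ) :
    ∀ n, (T1.configs w ρ n).1 = 2 → ∃ m < n, ρ m = t3 := by
  intro n
  induction n with
  | zero => intro h; simp [TA.configs, T1] at h
  | succ n ih =>
    intro h
    have hd : (ρ n).dst = 2 := by
      rw [TA.configs_fst] at h; simpa using h
    obtain ⟨ht, _, hsrc, _⟩ := hrun n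
    rcases mem_trans ht with h' | h' | h' | h' | h'
    · rw [h'] at hd; simp [t0] at hd
    · rw [h'] at hd; simp [t1] at hd
    · rw [h'] at hd; simp [t2] at hd
    · exact ⟨n, Nat.lt_succ_self n, h'⟩
    · rw [h'] at hsrc
      obtain ⟨m, hm, hh⟩ := ih hsrc.symm
      exact ⟨m, Nat.lt_succ_of_lt hm, hh⟩

lemma lang_sub : T1.Lang (TA.reachAcc {2}) ⊆ LPrime := by
  rintro w ⟨hw, ρ, hrun, n₀, hn₀⟩
  refine ⟨hw, ?_⟩
  have hex : ∃ n, ρ n = t3 := by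
    rcases hn₀ with h | h
    · have h2 : (T1.configs w ρ n₀).1 = 2 := by
        rw [← (hrun n₀).2.2.1]; simpa using h
      obtain ⟨m, _, hm⟩ := reach2 hrun n₀ h2
      exact ⟨m, hm⟩
    · obtain ⟨ht, _, hsrc, _⟩ := hrun n₀
      rcases mem_trans ht with h' | h' | h' | h' | h'
      · rw [h'] at h; simp [t0, Set.mem_singleton_iff] at h
      · rw [h'] at h; simp [t1, Set.mem_singleton_iff] at h
      · rw [h'] at h; simp [t2, Set.mem_singleton_iff] at h
      · exact ⟨n₀, h'⟩
      · rw [h'] at hsrc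
        obtain ⟨m, _, hm⟩ := reach2 hrun n₀ hsrc.symm
        exact ⟨m, hm⟩
  obtain ⟨n, hn⟩ := hex
  obtain ⟨ht, _, hsrc, hg⟩ := hrun n
  rw [hn] at hg hsrc
  have hval : (((T1.configs w ρ n).2 () : ℝ≥0) : ℝ)
      + ((TA.delayAt w n : ℝ≥0) : ℝ) = 1 := by
    obtain ⟨hle, hlt⟩ := hg
    simp only [Guard.sat] at hle hlt
    push_cast at hle hlt
    linarith
  obtain ⟨m, hmn, hm⟩ := reach1 hrun n hsrc.symm
  obtain ⟨m', hm'⟩ := TA.lastIdx_some (ρ := ρ) (x := ()) (n := n)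
    ⟨m, hmn, by rw [hm]; trivial⟩
  have hve := TA.val_eq T1 hw ρ n ()
  rw [hm'] at hve
  refine ⟨m', n, ?_⟩
  rw [TA.lrTime] at hve
  linarith

lemma sub_lang : LPrime ⊆ T1.Lang (TA.reachAcc {2}) := by
  rintro w ⟨hw, i, j, hij⟩
  have hlt : (w i).2 < (w j).2 := by rw [← NNReal.coe_lt_coe]; linarith
  have hij' : i < j := hw.lt_iff_lt.mp hlt
  set ρ : ℕ → Tr (Fin 3) Unit Unit := fun n =>
    if n < i then t0 else if n = i then t1 else if n < j then t2
    else if n = j then t3 else t4 with hρ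
  have hr0 : ∀ n, n < i → ρ n = t0 := fun n h => by
    simp only [hρ]; rw [if_pos h]
  have hr1 : ∀ n, n = i → ρ n = t1 := fun n h => by
    simp only [hρ]; rw [if_neg (by omega), if_pos h]
  have hr2 : ∀ n, ¬ n < i → n ≠ i → n < j → ρ n = t2 := fun n a b c => by
    simp only [hρ]; rw [if_neg a, if_neg b, if_pos c]
  have hr3 : ∀ n, n = j → ρ n = t3 := fun n h => by
    simp only [hρ]
    rw [if_neg (by omega), if_neg (by omega), if_neg (by omega), if_pos h]
  have hr4 : ∀ n, j < n → ρ n = t4 := fun n h => by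
    simp only [hρ]
    rw [if_neg (by omega), if_neg (by omega), if_neg (by omega), if_neg (by omega)]
  have hstate : ∀ n, (T1.configs w ρ n).1
      = if n ≤ i then 0 else if n ≤ j then 1 else 2 := by
    intro n
    induction n with
    | zero => simp [TA.configs, T1]
    | succ n ih =>
      rw [TA.configs_fst]
      simp only [Nat.succ_ne_zero, dite_false, Nat.add_sub_cancel]
      by_cases h1 : n < i
      · rw [hr0 n h1, if_pos (by omega : n + 1 ≤ i)]; rfl
      · by_cases h2 : n = i
        · rw [hr1 n h2, if_neg (by omega : ¬ n + 1 ≤ i), if_pos (by omega : n + 1 ≤ j)]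
          rfl
        · by_cases h3 : n < j
          · rw [hr2 n h1 h2 h3, if_neg (by omega : ¬ n + 1 ≤ i),
              if_pos (by omega : n + 1 ≤ j)]
            rfl
          · by_cases h4 : n = j
            · rw [hr3 n h4, if_neg (by omega : ¬ n + 1 ≤ i),
                if_neg (by omega : ¬ n + 1 ≤ j)]
              rfl
            · rw [hr4 n (by omega), if_neg (by omega : ¬ n + 1 ≤ i),
                if_neg (by omega : ¬ n + 1 ≤ j)]
              rfl
  have hidx : TA.lastIdx ρ () j = some i := by
    refine TA.lastIdx_eq hij' (by rw [hr1 i rfl]; trivial) ?_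
    intro m hm1 hm2
    rw [hr2 m (by omega) (by omega) hm2]
    simp [t2]
  refine ⟨hw, ρ, ?_, j, Or.inr (by rw [hr3 j rfl]; exact rfl)⟩
  intro n
  refine ⟨?_, Subsingleton.elim _ _, ?_, ?_⟩
  · show ρ n ∈ T1.trans
    simp only [hρ]
    split_ifs <;> simp [T1, Set.mem_insert_iff]
  · rw [hstate n]
    by_cases h1 : n < i
    · rw [hr0 n h1, if_pos (by omega : n ≤ i)]; rfl
    · by_cases h2 : n = i
      · rw [hr1 n h2, if_pos (by omega : n ≤ i)]; rfl
      · by_cases h3 : n < j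
        · rw [hr2 n h1 h2 h3, if_neg (by omega : ¬ n ≤ i), if_pos (by omega : n ≤ j)]
          rfl
        · by_cases h4 : n = j
          · rw [hr3 n h4, if_neg (by omega : ¬ n ≤ i), if_pos (by omega : n ≤ j)]
            rfl
          · rw [hr4 n (by omega), if_neg (by omega : ¬ n ≤ i),
              if_neg (by omega : ¬ n ≤ j)]
            rfl
  · by_cases h4 : n = j
    · subst h4
      rw [hr3 n rfl]
      have hve := TA.val_eq T1 hw ρ n ()
      rw [hidx, TA.lrTime] at hve
      refine ⟨?_, ?_⟩ <;> simp only [Guard.sat] <;> push_cast <;>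
        first
        | linarith
        | (intro hcon; linarith)
    · have hgt : (ρ n).guard = Guard.tt := by
        by_cases h1 : n < i
        · rw [hr0 n h1]; rfl
        · by_cases h2 : n = i
          · rw [hr1 n h2]; rfl
          · by_cases h3 : n < j
            · rw [hr2 n h1 h2 h3]; rfl
            · rw [hr4 n (by omega)]; rfl
      rw [hgt]
      trivial

lemma part1 : ∃ (Q : Type) (_ : Fintype Q) (T : TA Q Unit Unit) (F : Set Q),
    T.trans.Finite ∧ T.Lang (TA.reachAcc F) = LPrime := by
  refine ⟨Fin 3, inferInstance, T1, {2}, ?_, Set.Subset.antisymm lang_sub sub_lang⟩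
  show (({t0, t1, t2, t3, t4} : Set (Tr (Fin 3) Unit Unit))).Finite
  exact (Set.finite_singleton t4).insert t3 |>.insert t2 |>.insert t1 |>.insert t0

end Part1


/-! ### Part 2: impossibility for history-deterministic parity automata -/

namespace Part2

/-- Fractional position of the `x`-th prefix event. -/
noncomputable def A (K x : ℕ) : ℝ := ((x : ℝ) + 1) / ((K : ℝ) + 2)

/-- The perturbation. -/
noncomputable def eps (K : ℕ) : ℝ := 1 / (2 * ((K : ℝ) + 2))

/-- Timestamps of the "good" word. -/
noncomputable def tR (K j : ℕ) (n : ℕ) : ℝ :=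
  if n ≤ K then A K n
  else if n = K + 1 then 1 + A K j
  else 2 * ((n : ℝ) - ((K : ℝ) + 1)) + 1 / 2 + A K j

/-- Timestamps of the "bad" word. -/
noncomputable def tB (K j : ℕ) (n : ℕ) : ℝ :=
  tR K j n + if n = K + 1 then eps K else 0

lemma hK2 (K : ℕ) : (0 : ℝ) < (K : ℝ) + 2 := by positivity

lemma A_pos (K x : ℕ) : 0 < A K x := by unfold A; positivity

lemma eps_pos (K : ℕ) : 0 < eps K := by unfold eps; positivity

lemma eps_le (K : ℕ) : eps K ≤ 1 / 4 := by
  unfold eps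
  have h4 : (0:ℝ) < 4 := by norm_num
  have : (4:ℝ) ≤ 2 * ((K : ℝ) + 2) := by
    have : (0:ℝ) ≤ (K : ℝ) := Nat.cast_nonneg K
    linarith
  calc 1 / (2 * ((K : ℝ) + 2)) ≤ 1 / 4 := one_div_le_one_div_of_le h4 this

lemma two_eps (K : ℕ) : 2 * eps K = 1 / ((K : ℝ) + 2) := by
  unfold eps
  field_simp

lemma A_lt_one {K x : ℕ} (hx : x ≤ K) : A K x + 2 * eps K ≤ 1 := by
  rw [two_eps]
  unfold A
  rw [← add_div, div_le_one (hK2 K)]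
  have : (x : ℝ) ≤ (K : ℝ) := by exact_mod_cast hx
  linarith

lemma A_gap {K x y : ℕ} (h : x < y) : A K x + 2 * eps K ≤ A K y := by
  rw [two_eps]
  unfold A
  rw [← add_div, div_le_div_iff_of_pos_right (hK2 K)]
  have : (x : ℝ) + 1 ≤ (y : ℝ) := by exact_mod_cast h
  linarith

lemma tR_P {K x : ℕ} (j : ℕ) (hx : x ≤ K) : tR K j x = A K x := by
  unfold tR; rw [if_pos hx]

lemma tR_M (K j : ℕ) : tR K j (K + 1) = 1 + A K j := by
  unfold tR; rw [if_neg (by omega), if_pos rfl]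

lemma tR_T {K x : ℕ} (j : ℕ) (hx : K + 2 ≤ x) :
    tR K j x = 2 * ((x : ℝ) - ((K : ℝ) + 1)) + 1 / 2 + A K j := by
  unfold tR; rw [if_neg (by omega), if_neg (by omega)]

lemma tB_eq {K x : ℕ} (j : ℕ) (hx : x ≠ K + 1) : tB K j x = tR K j x := by
  unfold tB; rw [if_neg hx, add_zero]

lemma tB_P {K x : ℕ} (j : ℕ) (hx : x ≤ K) : tB K j x = A K x := by
  rw [tB_eq j (by omega), tR_P j hx]

lemma tB_M (K j : ℕ) : tB K j (K + 1) = 1 + A K j + eps K := by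
  unfold tB; rw [if_pos rfl, tR_M]

lemma tB_T {K x : ℕ} (j : ℕ) (hx : K + 2 ≤ x) :
    tB K j x = 2 * ((x : ℝ) - ((K : ℝ) + 1)) + 1 / 2 + A K j := by
  rw [tB_eq j (by omega), tR_T j hx]

lemma tR_nonneg (K j n : ℕ) : 0 ≤ tR K j n := by
  rcases (by omega : n ≤ K ∨ n = K + 1 ∨ K + 2 ≤ n) with h | h | h
  · rw [tR_P j h]; exact (A_pos K n).le
  · subst h; rw [tR_M]; linarith [A_pos K j]
  · rw [tR_T j h]
    have : (K : ℝ) + 2 ≤ (n : ℝ) := by exact_mod_cast h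
    linarith [A_pos K j]

lemma tB_nonneg (K j n : ℕ) : 0 ≤ tB K j n := by
  unfold tB
  have := tR_nonneg K j n
  have := (eps_pos K).le
  split_ifs <;> linarith

lemma tR_mono (K j : ℕ) : StrictMono (tR K j) := by
  apply strictMono_nat_of_lt_succ
  intro n
  rcases (by omega : n + 1 ≤ K ∨ n = K ∨ n = K + 1 ∨ K + 2 ≤ n + 1 ∧ K + 2 ≤ n)
    with h | h | h | ⟨h, h'⟩
  · rw [tR_P j (by omega), tR_P j h]
    unfold A
    rw [div_lt_div_iff_of_pos_right (hK2 K)]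
    push_cast; linarith
  · rw [h, tR_P j le_rfl, tR_M]
    linarith [A_lt_one (le_refl K), A_pos K j, eps_pos K]
  · subst h
    rw [tR_M, tR_T j (by omega)]
    push_cast
    linarith
  · rw [tR_T j h', tR_T j h]
    push_cast
    linarith

lemma tB_mono (K j : ℕ) : StrictMono (tB K j) := by
  apply strictMono_nat_of_lt_succ
  intro n
  have h1 := tR_mono K j (Nat.lt_succ_self n)
  have h2 := eps_pos K
  have h3 := eps_le K
  rcases (by omega : (n ≠ K + 1 ∧ n + 1 ≠ K + 1) ∨ n + 1 = K + 1 ∨ n = K + 1)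
    with ⟨ha, hb⟩ | h | h
  · rw [tB_eq j ha, tB_eq j hb]; exact h1
  · have hnk : n = K := by omega
    rw [h, tB_M, hnk, tB_P j le_rfl]
    linarith [A_lt_one (le_refl K), A_pos K j, eps_pos K]
  · rw [h, tB_M, tB_eq j (by omega), tR_T j (by omega)]
    push_cast
    linarith

/-- Value of an optional reset time under a timestamp function. -/
noncomputable def lrT (f : ℕ → ℝ) : Option ℕ → ℝ
  | none => 0
  | some m => f m

lemma lrT_none (f : ℕ → ℝ) : lrT f none = 0 := rfl
lemma lrT_some (f : ℕ → ℝ) (m : ℕ) : lrT f (some m) = f m := rfl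

/-- Key interval-equivalence for single-clock values. -/
lemma key1 (K j n : ℕ) (hj : j ≤ K) (o : Option ℕ)
    (hlt : ∀ m, o = some m → m < n)
    (hfr : ∀ m, o = some m → m ≤ K → K + 1 ≤ n → m ≠ j) :
    SameIv (tR K j n - lrT (tR K j) o) (tB K j n - lrT (tB K j) o) := by
  have hAj := A_pos K j
  have hAj1 := A_lt_one hj
  have he0 := eps_pos K
  have he1 := eps_le K
  rcases (by omega : n ≤ K ∨ n = K + 1 ∨ K + 2 ≤ n) with hn | hn | hn
  · -- before the perturbed event: everything equal
    left
    rcases o with _ | m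
    · rw [lrT_none, lrT_none, tB_eq j (by omega)]
    · have hm := hlt m rfl
      rw [lrT_some, lrT_some, tB_eq j (by omega), tB_eq j (by omega : m ≠ K + 1)]
  · -- n = K + 1
    subst hn
    rcases o with _ | m
    · rw [lrT_none, lrT_none, tR_M, tB_M, sub_zero, sub_zero]
      exact Or.inr ⟨1, by constructor <;> constructor <;> push_cast <;> linarith⟩
    · have hm : m ≤ K := by have := hlt m rfl; omega
      have hmj : m ≠ j := hfr m rfl hm le_rfl
      have hAm := A_pos K m
      have hAm1 := A_lt_one hm
      rw [lrT_some, lrT_some, tR_M, tB_M, tB_P j hm, tR_P j hm]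
      rcases lt_or_gt_of_ne hmj with hmj' | hmj'
      · have hgap := A_gap (K := K) hmj'
        exact Or.inr ⟨1, by constructor <;> constructor <;> push_cast <;> linarith⟩
      · have hgap := A_gap (K := K) hmj'
        exact Or.inr ⟨0, by constructor <;> constructor <;> push_cast <;> linarith⟩
  · -- n ≥ K + 2
    have hcn : (K : ℝ) + 2 ≤ (n : ℝ) := by exact_mod_cast hn
    rcases o with _ | m
    · left; rw [lrT_none, lrT_none, tB_eq j (by omega)]
    · by_cases hm : m = K + 1
      · subst hm
        rw [lrT_some, lrT_some, tR_M, tB_M, tB_eq j (by omega), tR_T j hn]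
        refine Or.inr ⟨2 * (n : ℤ) - 2 * (K : ℤ) - 3,
          by constructor <;> constructor <;> push_cast <;> linarith⟩
      · left
        rw [lrT_some, lrT_some, tB_eq j (by omega), tB_eq j hm]

/-- Key interval-equivalence for the reset time of the perturbed event against others. -/
lemma key2aux (K j n : ℕ) (hj : j ≤ K) (hn : K + 1 < n) (o : Option ℕ)
    (hlt : ∀ m, o = some m → m < n) (hne : o ≠ some (K + 1))
    (hfr : ∀ m, o = some m → m ≤ K → m ≠ j) :
    SameIv (tR K j (K + 1) - lrT (tR K j) o) (tB K j (K + 1) - lrT (tB K j) o) := by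
  have hAj := A_pos K j
  have hAj1 := A_lt_one hj
  have he0 := eps_pos K
  have he1 := eps_le K
  rcases o with _ | m
  · rw [lrT_none, lrT_none, tR_M, tB_M, sub_zero, sub_zero]
    exact Or.inr ⟨1, by constructor <;> constructor <;> push_cast <;> linarith⟩
  · have hmne : m ≠ K + 1 := by intro h; exact hne (by rw [h])
    rcases (by omega : m ≤ K ∨ K + 2 ≤ m) with hm | hm
    · have hmj : m ≠ j := hfr m rfl hm
      have hAm := A_pos K m
      have hAm1 := A_lt_one hm
      rw [lrT_some, lrT_some, tR_M, tB_M, tB_P j hm, tR_P j hm]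
      rcases lt_or_gt_of_ne hmj with hmj' | hmj'
      · have hgap := A_gap (K := K) hmj'
        exact Or.inr ⟨1, by constructor <;> constructor <;> push_cast <;> linarith⟩
      · have hgap := A_gap (K := K) hmj'
        exact Or.inr ⟨0, by constructor <;> constructor <;> push_cast <;> linarith⟩
    · have hcm : (K : ℝ) + 2 ≤ (m : ℝ) := by exact_mod_cast hm
      rw [lrT_some, lrT_some, tR_M, tB_M, tB_T j hm, tR_T j hm]
      refine Or.inr ⟨2 * (K : ℤ) - 2 * (m : ℤ) + 2,
        by constructor <;> constructor <;> push_cast <;> linarith⟩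

lemma key2 (K j n : ℕ) (hj : j ≤ K) (ox oy : Option ℕ)
    (hltx : ∀ m, ox = some m → m < n)
    (hfrx : ∀ m, ox = some m → m ≤ K → K + 1 ≤ n → m ≠ j)
    (hlty : ∀ m, oy = some m → m < n)
    (hfry : ∀ m, oy = some m → m ≤ K → K + 1 ≤ n → m ≠ j) :
    SameIv (lrT (tR K j) oy - lrT (tR K j) ox)
      (lrT (tB K j) oy - lrT (tB K j) ox) := by
  have hbase : ∀ o : Option ℕ, o ≠ some (K + 1) → lrT (tB K j) o = lrT (tR K j) o := by
    rintro (_ | m) h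
    · rfl
    · rw [lrT_some, lrT_some, tB_eq j (fun hc => h (by rw [hc]))]
  by_cases hx : ox = some (K + 1)
  · by_cases hy : oy = some (K + 1)
    · left; rw [hx, hy, sub_self, sub_self]
    · have hnK : K + 1 < n := hltx (K + 1) hx
      have h := (key2aux K j n hj hnK oy hlty hy
        (fun m hm hmK => hfry m hm hmK hnK.le)).neg
      rw [hx]
      rw [show -(tR K j (K + 1) - lrT (tR K j) oy)
          = lrT (tR K j) oy - lrT (tR K j) (some (K + 1)) from by rw [lrT_some]; ring,
        show -(tB K j (K + 1) - lrT (tB K j) oy)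
          = lrT (tB K j) oy - lrT (tB K j) (some (K + 1)) from by rw [lrT_some]; ring] at h
      exact h
  · by_cases hy : oy = some (K + 1)
    · have hnK : K + 1 < n := hlty (K + 1) hy
      have h := key2aux K j n hj hnK ox hltx hx
        (fun m hm hmK => hfrx m hm hmK hnK.le)
      rw [hy]
      rw [show tR K j (K + 1) - lrT (tR K j) ox
          = lrT (tR K j) (some (K + 1)) - lrT (tR K j) ox from by rw [lrT_some],
        show tB K j (K + 1) - lrT (tB K j) ox
          = lrT (tB K j) (some (K + 1)) - lrT (tB K j) ox from by rw [lrT_some]] at h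
      exact h
    · left; rw [hbase ox hx, hbase oy hy]

/-- No two events of the bad word are exactly one time unit apart. -/
lemma noPair (K j : ℕ) (hj : j ≤ K) (a b : ℕ) : tB K j b - tB K j a ≠ 1 := by
  intro hab
  have hAj := A_pos K j
  have hAj1 := A_lt_one hj
  have he0 := eps_pos K
  have he1 := eps_le K
  rcases (by omega : b ≤ K ∨ b = K + 1 ∨ K + 2 ≤ b) with hb | hb | hb
  · have hAb := A_pos K b
    have hAb1 := A_lt_one hb
    rw [tB_P j hb] at hab
    rcases (by omega : a ≤ K ∨ a = K + 1 ∨ K + 2 ≤ a) with ha | ha | ha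
    · have hAa := A_pos K a
      have hAa1 := A_lt_one ha
      rw [tB_P j ha] at hab
      linarith
    · rw [ha, tB_M] at hab; linarith
    · have hca : (K : ℝ) + 2 ≤ (a : ℝ) := by exact_mod_cast ha
      rw [tB_T j ha] at hab; linarith
  · rw [hb, tB_M] at hab
    rcases (by omega : a ≤ K ∨ a = K + 1 ∨ K + 2 ≤ a) with ha | ha | ha
    · have hAa := A_pos K a
      have hAa1 := A_lt_one ha
      rw [tB_P j ha] at hab
      rcases lt_trichotomy a j with h | h | h
      · have hgap := A_gap (K := K) h; linarith
      · subst h; linarith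
      · have hgap := A_gap (K := K) h; linarith
    · rw [ha, tB_M] at hab; linarith
    · have hca : (K : ℝ) + 2 ≤ (a : ℝ) := by exact_mod_cast ha
      rw [tB_T j ha] at hab; linarith
  · have hcb : (K : ℝ) + 2 ≤ (b : ℝ) := by exact_mod_cast hb
    rw [tB_T j hb] at hab
    rcases (by omega : a ≤ K ∨ a = K + 1 ∨ K + 2 ≤ a) with ha | ha | ha
    · have hAa := A_pos K a
      have hAa1 := A_lt_one ha
      rw [tB_P j ha] at hab
      linarith
    · rw [ha, tB_M] at hab; linarith
    · have hca : (K : ℝ) + 2 ≤ (a : ℝ) := by exact_mod_cast ha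
      rw [tB_T j ha] at hab
      -- 2*(b-a) = 1 : impossible for integers
      have : 2 * ((b : ℝ) - (a : ℝ)) = 1 := by linarith
      have hZ : (2 * (b : ℤ) - 2 * (a : ℤ) : ℝ) = 1 := by push_cast; push_cast at this; linarith
      have : (2 * (b : ℤ) - 2 * (a : ℤ)) = 1 := by exact_mod_cast hZ
      omega

/-- The good word. -/
noncomputable def wG (K j : ℕ) : ℕ → Unit × ℝ≥0 := fun n => ((), (tR K j n).toNNReal)

/-- The bad word. -/
noncomputable def wB (K j : ℕ) : ℕ → Unit × ℝ≥0 := fun n => ((), (tB K j n).toNNReal)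

lemma wG_coe (K j n : ℕ) : (((wG K j n).2 : ℝ≥0) : ℝ) = tR K j n :=
  Real.coe_toNNReal _ (tR_nonneg K j n)

lemma wB_coe (K j n : ℕ) : (((wB K j n).2 : ℝ≥0) : ℝ) = tB K j n :=
  Real.coe_toNNReal _ (tB_nonneg K j n)

lemma wG_timed (K j : ℕ) : TA.IsTimedWord (wG K j) := by
  intro a b hab
  rw [← NNReal.coe_lt_coe, wG_coe, wG_coe]
  exact tR_mono K j hab

lemma wB_timed (K j : ℕ) : TA.IsTimedWord (wB K j) := by
  intro a b hab
  rw [← NNReal.coe_lt_coe, wB_coe, wB_coe]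
  exact tB_mono K j hab

lemma lrTime_wG (K j : ℕ) (o : Option ℕ) : TA.lrTime (wG K j) o = lrT (tR K j) o := by
  cases o with
  | none => rfl
  | some m => rw [TA.lrTime, lrT_some, wG_coe]

lemma lrTime_wB (K j : ℕ) (o : Option ℕ) : TA.lrTime (wB K j) o = lrT (tB K j) o := by
  cases o with
  | none => rfl
  | some m => rw [TA.lrTime, lrT_some, wB_coe]

lemma wG_mem_LPrime {K j : ℕ} (hj : j ≤ K) : wG K j ∈ LPrime := by
  refine ⟨wG_timed K j, j, K + 1, ?_⟩
  rw [wG_coe, wG_coe, tR_M, tR_P j hj]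
  ring

/-- The main impossibility. -/
lemma part2 (Q C : Type) [Fintype Q] [Fintype C] (T : TA Q C Unit)
    (pri : Q → ℕ) : ¬(T.HD (parityAcc pri) ∧ T.Lang (parityAcc pri) = LPrime) := by
  rintro ⟨⟨r, hr⟩, hLang⟩
  set K := Fintype.card C with hKdef
  -- the first K+1 events are the same in all the good words
  have hprefix : ∀ j j' m, m ≤ K → wG K j m = wG K j' m := by
    intro j j' m hm
    unfold wG
    rw [tR_P j hm, tR_P j' hm]
  set ρ0 : ℕ → Tr Q C Unit := TA.runOf r (wG K 0) with hρ0
  -- pigeonhole: some prefix event is not the last reset of any clock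
  obtain ⟨j, hj, hjfresh⟩ :
      ∃ j, j ≤ K ∧ ∀ x : C, TA.lastIdx ρ0 x (K + 1) ≠ some j := by
    by_contra hcon
    push_neg at hcon
    have hch : ∀ a : Fin (K + 1), ∃ x : C, TA.lastIdx ρ0 x (K + 1) = some (a : ℕ) :=
      fun a => hcon (a : ℕ) (by omega)
    choose g hg using hch
    have hinj : Function.Injective g := by
      intro a b hab
      have h1 := hg a
      rw [hab, hg b] at h1
      simp only [Option.some.injEq] at h1
      exact Fin.ext h1.symm
    have := Fintype.card_le_of_injective g hinj
    simp only [Fintype.card_fin, ← hKdef] at this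
    omega
  set wg := wG K j with hwg
  set wb := wB K j with hwb
  set ρ : ℕ → Tr Q C Unit := TA.runOf r wg with hρ
  have hρagree : ∀ m ≤ K, ρ m = ρ0 m := by
    intro m hm
    exact TA.runOf_congr r fun m' hm' => hprefix j 0 m' (le_trans hm' hm)
  -- freshness of j along the run ρ
  have hfreshρ : ∀ n x m, K + 1 ≤ n → TA.lastIdx ρ x n = some m → m ≤ K → m ≠ j := by
    intro n x m hn hidx hm
    obtain ⟨d, rfl⟩ : ∃ d, n = K + 1 + d := ⟨n - (K + 1), by omega⟩
    have h1 := TA.lastIdx_stable d hidx hm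
    rw [TA.lastIdx_congr fun m' hm' => hρagree m' (by omega)] at h1
    intro hcontra
    subst hcontra
    exact hjfresh x h1
  -- the resolver run on the good word
  have hgood : wg ∈ T.Lang (parityAcc pri) := by rw [hLang]; exact wG_mem_LPrime hj
  obtain ⟨hrunG, hpar⟩ := hr wg hgood
  -- clock values along the run
  have hvG : ∀ n x, (((T.configs wg ρ n).2 x + TA.delayAt wg n : ℝ≥0) : ℝ)
      = tR K j n - lrT (tR K j) (TA.lastIdx ρ x n) := by
    intro n x
    rw [NNReal.coe_add, TA.val_eq T (wG_timed K j) ρ n x, wG_coe, lrTime_wG]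
  have hvB : ∀ n x, (((T.configs wb ρ n).2 x + TA.delayAt wb n : ℝ≥0) : ℝ)
      = tB K j n - lrT (tB K j) (TA.lastIdx ρ x n) := by
    intro n x
    rw [NNReal.coe_add, TA.val_eq T (wB_timed K j) ρ n x, wB_coe, lrTime_wB]
  -- the same transition sequence is a run on the bad word
  have hrunB : T.IsRunOn wb ρ := by
    intro n
    obtain ⟨h1, _, h3, h4⟩ := hrunG n
    refine ⟨h1, Subsingleton.elim _ _, ?_, ?_⟩
    · rw [TA.configs_fst] at h3 ⊢
      exact h3
    · refine (Guard.sat_congr _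
        (fun x => (T.configs wg ρ n).2 x + TA.delayAt wg n)
        (fun x => (T.configs wb ρ n).2 x + TA.delayAt wb n) ?_ ?_).mp h4
      · intro x
        rw [hvG n x, hvB n x]
        exact key1 K j n hj (TA.lastIdx ρ x n)
          (fun m hm => TA.lastIdx_lt hm)
          (fun m hm hmK hnK => hfreshρ n x m hnK hm hmK)
      · intro x y
        rw [hvG n x, hvB n x, hvG n y, hvB n y]
        have harith : ∀ a b c : ℝ, (a - b) - (a - c) = c - b := fun a b c => by ring
        rw [harith, harith]
        exact key2 K j n hj (TA.lastIdx ρ x n) (TA.lastIdx ρ y n)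
          (fun m hm => TA.lastIdx_lt hm)
          (fun m hm hmK hnK => hfreshρ n x m hnK hm hmK)
          (fun m hm => TA.lastIdx_lt hm)
          (fun m hm hmK hnK => hfreshρ n y m hnK hm hmK)
  -- but the bad word is not in L'
  have hbmem : wb ∈ T.Lang (parityAcc pri) := ⟨wB_timed K j, ρ, hrunB, hpar⟩
  rw [hLang] at hbmem
  obtain ⟨_, a, b, hab⟩ := hbmem
  rw [show wb b = wB K j b from rfl, show wb a = wB K j a from rfl, wB_coe, wB_coe] at hab
  exact noPair K j hj a b hab

end Part2

/-- `L'` is recognized by a nondeterministic one-clock timed automaton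
with reachability acceptance, but by no history-deterministic timed automaton with
parity acceptance, whatever its number of clocks. -/
theorem stmt11 :
    (∃ (Q : Type) (_ : Fintype Q) (T : TA Q Unit Unit) (F : Set Q),
      T.trans.Finite ∧ T.Lang (TA.reachAcc F) = LPrime) ∧
    (∀ (Q C : Type) (_ : Fintype Q) (_ : Fintype C) (T : TA Q C Unit)
      (_ : T.trans.Finite) (pri : Q → ℕ),
        ¬(T.HD (parityAcc pri) ∧ T.Lang (parityAcc pri) = LPrime)) := by
  refine ⟨Part1.part1, ?_⟩
  intro Q C iQ iC T _ pri
  exact @Part2.part2 Q C iQ iC T pri
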